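/- The multiplicative monoid of nonzero polynomials with natural number coefficients is not length-factorial. Specifically, in the semiring ℕ[X] of polynomials over the natural numbers: the polynomials X + 1, X + 2, X^3 + 2X + 3, and X^3 + X^2 + X + 6 are all irreducible in the multiplicative monoid of nonzero elements of ℕ[X], they are pairwise non-associate, and (X + 1)·(X^3 + X^2 + X + 6) = (X + 2)·(X^3 + 2X + 3), so this element admits two distinct factorizations into irreducibles of the same length 2. -/
import Mathlib


open Polynomial

/-- The multiplicative monoid of nonzero elements of `ℕ[X]` is length-factorial:
it is atomic and no two distinct factorizations into irreducibles of the same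
element have the same length.  (In `ℕ[X]` the only unit is `1`, so factorizations
are simply multisets of irreducible polynomials.) -/
def IsLengthFactorialNatPoly : Prop :=
  (∀ p : Polynomial ℕ, p ≠ 0 → ¬IsUnit p →
    ∃ z : Multiset (Polynomial ℕ), (∀ q ∈ z, Irreducible q) ∧ z.prod = p) ∧
  ∀ z₁ z₂ : Multiset (Polynomial ℕ), (∀ q ∈ z₁, Irreducible q) → (∀ q ∈ z₂, Irreducible q) →
    z₁.prod = z₂.prod → Multiset.card z₁ = Multiset.card z₂ → z₁ = z₂

lemma aux_linear (P : Polynomial ℕ) (hm : P.Monic) (hd : P.natDegree = 1) : Irreducible P := by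
  constructor
  · intro hu
    have := hm.isUnit_iff.mp hu
    rw [this] at hd; simp at hd
  · intro p q hpq
    have hP0 : P ≠ 0 := hm.ne_zero
    have hp0 : p ≠ 0 := fun h => hP0 (by rw [hpq, h, zero_mul])
    have hq0 : q ≠ 0 := fun h => hP0 (by rw [hpq, h, mul_zero])
    have hl : p.leadingCoeff * q.leadingCoeff = 1 := by
      rw [← leadingCoeff_mul, ← hpq, hm.leadingCoeff]
    have hp : p.Monic := Nat.eq_one_of_mul_eq_one_right hl
    have hq : q.Monic := Nat.eq_one_of_mul_eq_one_left hl
    have hdeg : p.natDegree + q.natDegree = 1 := by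
      rw [← natDegree_mul hp0 hq0, ← hpq, hd]
    rcases Nat.eq_zero_or_pos p.natDegree with h0 | h1
    · left; rw [hp.natDegree_eq_zero.mp h0]; exact isUnit_one
    · right
      have : q.natDegree = 0 := by omega
      rw [hq.natDegree_eq_zero.mp this]; exact isUnit_one

lemma aux_cubic (P : Polynomial ℕ) (hm : P.Monic) (hd : P.natDegree = 3)
    (h : ∀ b c0 c1 : ℕ, P.coeff 2 = c1 + b → P.coeff 1 = c0 + b * c1 →
      P.coeff 0 = b * c0 → False) : Irreducible P := by
  have key : ∀ p q : Polynomial ℕ, p.Monic → q.Monic → p.natDegree = 1 →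
      q.natDegree = 2 → P = p * q → False := by
    intro p q hp hq h1 h2 hPq
    have hp' := hp.eq_X_add_C h1
    set b := p.coeff 0 with hb
    have hq2 : q.coeff 2 = 1 := by
      have := hq.coeff_natDegree; rwa [h2] at this
    have e2 : P.coeff 2 = q.coeff 1 + b := by
      rw [hPq, hp', add_mul, coeff_add, coeff_C_mul, hq2, mul_one,
        coeff_X_mul q 1]
    have e1 : P.coeff 1 = q.coeff 0 + b * q.coeff 1 := by
      rw [hPq, hp', add_mul, coeff_add, coeff_C_mul, coeff_X_mul q 0]
    have e0 : P.coeff 0 = b * q.coeff 0 := by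
      rw [hPq, hp', add_mul, coeff_add, coeff_C_mul]
      simp
    exact h b (q.coeff 0) (q.coeff 1) e2 e1 e0
  constructor
  · intro hu
    have := hm.isUnit_iff.mp hu
    rw [this] at hd; simp at hd
  · intro p q hpq
    have hP0 : P ≠ 0 := hm.ne_zero
    have hp0 : p ≠ 0 := fun h => hP0 (by rw [hpq, h, zero_mul])
    have hq0 : q ≠ 0 := fun h => hP0 (by rw [hpq, h, mul_zero])
    have hl : p.leadingCoeff * q.leadingCoeff = 1 := by
      rw [← leadingCoeff_mul, ← hpq, hm.leadingCoeff]
    have hp : p.Monic := Nat.eq_one_of_mul_eq_one_right hl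
    have hq : q.Monic := Nat.eq_one_of_mul_eq_one_left hl
    have hdeg : p.natDegree + q.natDegree = 3 := by
      rw [← natDegree_mul hp0 hq0, ← hpq, hd]
    obtain h0 | h1 | h2 | h3 : p.natDegree = 0 ∨ p.natDegree = 1 ∨
        p.natDegree = 2 ∨ p.natDegree = 3 := by omega
    · left; rw [hp.natDegree_eq_zero.mp h0]; exact isUnit_one
    · exact (key p q hp hq h1 (by omega) hpq).elim
    · exact (key q p hq hp (by omega) h2 (by rw [hpq, mul_comm])).elim
    · right
      have : q.natDegree = 0 := by omega
      rw [hq.natDegree_eq_zero.mp this]; exact isUnit_one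

lemma irr1 : Irreducible (X + 1 : Polynomial ℕ) :=
  aux_linear _ (by monicity!) (by compute_degree!)

lemma irr2 : Irreducible (X + 2 : Polynomial ℕ) :=
  aux_linear _ (by monicity!) (by compute_degree!)

lemma irr3 : Irreducible (X ^ 3 + 2 * X + 3 : Polynomial ℕ) := by
  apply aux_cubic _ (by monicity!) (by compute_degree!)
  intro b c0 c1 h2 h1 h0
  simp [coeff_X] at h2 h1 h0
  have hb : b = 0 := by omega
  subst hb
  omega

lemma irr4 : Irreducible (X ^ 3 + X ^ 2 + X + 6 : Polynomial ℕ) := by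
  apply aux_cubic _ (by monicity!) (by compute_degree!)
  intro b c0 c1 h2 h1 h0
  simp [coeff_X] at h2 h1 h0
  have hb : b ≤ 1 := by omega
  interval_cases b <;> omega

lemma ne12 : (X + 1 : Polynomial ℕ) ≠ X + 2 := by
  intro h; have := congrArg (fun p => coeff p 0) h
  simp [coeff_X, coeff_one] at this

lemma ne13 : (X + 1 : Polynomial ℕ) ≠ X ^ 3 + 2 * X + 3 := by
  intro h; have := congrArg (fun p => coeff p 3) h
  simp [coeff_X, coeff_one] at this

lemma ne14 : (X + 1 : Polynomial ℕ) ≠ X ^ 3 + X ^ 2 + X + 6 := by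
  intro h; have := congrArg (fun p => coeff p 3) h
  simp [coeff_X, coeff_one] at this

lemma ne23 : (X + 2 : Polynomial ℕ) ≠ X ^ 3 + 2 * X + 3 := by
  intro h; have := congrArg (fun p => coeff p 3) h
  simp [coeff_X, coeff_one] at this

lemma ne24 : (X + 2 : Polynomial ℕ) ≠ X ^ 3 + X ^ 2 + X + 6 := by
  intro h; have := congrArg (fun p => coeff p 3) h
  simp [coeff_X, coeff_one] at this

lemma ne34 : (X ^ 3 + 2 * X + 3 : Polynomial ℕ) ≠ X ^ 3 + X ^ 2 + X + 6 := by
  intro h; have := congrArg (fun p => coeff p 2) h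
  simp [coeff_X, coeff_one] at this

lemma prodeq : (X + 1 : Polynomial ℕ) * (X ^ 3 + X ^ 2 + X + 6) =
    (X + 2) * (X ^ 3 + 2 * X + 3) := by ring

lemma mne : ({X + 1, X ^ 3 + X ^ 2 + X + 6} : Multiset (Polynomial ℕ)) ≠
    {X + 2, X ^ 3 + 2 * X + 3} := by
  intro h
  have hm : (X + 1 : Polynomial ℕ) ∈
      ({X + 2, X ^ 3 + 2 * X + 3} : Multiset (Polynomial ℕ)) := by
    rw [← h]; simp
  simp only [Multiset.insert_eq_cons, Multiset.mem_cons, Multiset.mem_singleton] at hm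
  rcases hm with h' | h'
  · exact ne12 h'
  · exact ne13 h'

theorem natPoly_not_length_factorial :
    Irreducible (X + 1 : Polynomial ℕ) ∧
    Irreducible (X + 2 : Polynomial ℕ) ∧
    Irreducible (X ^ 3 + 2 * X + 3 : Polynomial ℕ) ∧
    Irreducible (X ^ 3 + X ^ 2 + X + 6 : Polynomial ℕ) ∧
    List.Pairwise (fun p q : Polynomial ℕ => ¬Associated p q)
      [X + 1, X + 2, X ^ 3 + 2 * X + 3, X ^ 3 + X ^ 2 + X + 6] ∧
    (X + 1 : Polynomial ℕ) * (X ^ 3 + X ^ 2 + X + 6) = (X + 2) * (X ^ 3 + 2 * X + 3) ∧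
    ({X + 1, X ^ 3 + X ^ 2 + X + 6} : Multiset (Polynomial ℕ)) ≠
      {X + 2, X ^ 3 + 2 * X + 3} ∧
    ¬IsLengthFactorialNatPoly := by
  have m1 : (X + 1 : Polynomial ℕ).Monic := by monicity!
  have m2 : (X + 2 : Polynomial ℕ).Monic := by monicity!
  have m3 : (X ^ 3 + 2 * X + 3 : Polynomial ℕ).Monic := by monicity!
  have m4 : (X ^ 3 + X ^ 2 + X + 6 : Polynomial ℕ).Monic := by monicity!
  refine ⟨irr1, irr2, irr3, irr4, ?_, prodeq, mne, ?_⟩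
  · refine List.Pairwise.cons ?_ (List.Pairwise.cons ?_ (List.Pairwise.cons ?_ (List.pairwise_singleton _ _)))
    · intro q hq hass
      simp only [List.mem_cons, List.mem_singleton, List.not_mem_nil, or_false] at hq
      rcases hq with rfl | rfl | rfl
      · exact ne12 (eq_of_monic_of_associated m1 m2 hass)
      · exact ne13 (eq_of_monic_of_associated m1 m3 hass)
      · exact ne14 (eq_of_monic_of_associated m1 m4 hass)
    · intro q hq hass
      simp only [List.mem_cons, List.mem_singleton, List.not_mem_nil, or_false] at hq
      rcases hq with rfl | rfl
      · exact ne23 (eq_of_monic_of_associated m2 m3 hass)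
      · exact ne24 (eq_of_monic_of_associated m2 m4 hass)
    · intro q hq hass
      simp only [List.mem_singleton] at hq
      subst hq
      exact ne34 (eq_of_monic_of_associated m3 m4 hass)
  · rintro ⟨-, h2⟩
    apply mne
    apply h2
    · intro q hq
      simp only [Multiset.insert_eq_cons, Multiset.mem_cons, Multiset.mem_singleton] at hq
      rcases hq with rfl | rfl
      · exact irr1
      · exact irr4
    · intro q hq
      simp only [Multiset.insert_eq_cons, Multiset.mem_cons, Multiset.mem_singleton] at hq
      rcases hq with rfl | rfl
      · exact irr2
      · exact irr3
    · simp [prodeq]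
    · simp
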